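/- An operator x in B(H) satisfies x + x* ≥ C·x*x for some constant C > 0 if and only if x ∈ ℝ⁺·{a ∈ B(H) : ‖I - a‖ ≤ 1}, i.e. x = t·a for some t ≥ 0 and a with ‖I - a‖ ≤ 1. -/

import Mathlib

open ContinuousLinearMap

private theorem stmt7_key {H : Type*} [NormedAddCommGroup H] [InnerProductSpace ℂ H]
    [CompleteSpace H] (x : H →L[ℂ] H) (C : ℝ) (y : H) :
    RCLike.re (inner ℂ (((x + adjoint x - (C : ℂ) • (adjoint x * x)) y : H)) y : ℂ)
      = 2 * RCLike.re (inner ℂ (x y) y : ℂ) - C * ‖x y‖^2 := by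
  have hS : ((x + adjoint x - (C : ℂ) • (adjoint x * x)) y : H)
      = x y + adjoint x y - (C:ℂ) • (adjoint x (x y)) := rfl
  have h1 : (inner ℂ (((C:ℂ) • ((adjoint x) (x y)) : H)) y : ℂ) = ((C * ‖x y‖^2 : ℝ) : ℂ) := by
    rw [inner_smul_left, adjoint_inner_left, inner_self_eq_norm_sq_to_K]
    push_cast
    simp
  have h2 : RCLike.re (inner ℂ y (x y) : ℂ) = RCLike.re (inner ℂ (x y) y : ℂ) := inner_re_symm _ _
  rw [hS, inner_sub_left, inner_add_left, adjoint_inner_left, h1, map_sub, map_add, h2]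
  simp only [RCLike.re_to_complex, Complex.ofReal_re]
  ring

private theorem stmt7_sa {H : Type*} [NormedAddCommGroup H] [InnerProductSpace ℂ H]
    [CompleteSpace H] (x : H →L[ℂ] H) (C : ℝ) :
    IsSelfAdjoint (x + adjoint x - (C : ℂ) • (adjoint x * x)) := by
  simp only [← ContinuousLinearMap.star_eq_adjoint]
  rw [IsSelfAdjoint]
  simp only [star_sub, star_add, star_smul, star_mul, star_star, Complex.star_def,
    Complex.conj_ofReal]
  rw [add_comm]

/-- `x ∈ B(H)` satisfies `x + x* ≥ C·x*x` for some constant `C > 0` if and only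
if `x ∈ ℝ⁺·𝔉`, i.e. `x = t • a` for some `t ≥ 0` and `a` with `‖I - a‖ ≤ 1`. -/
theorem stmt7 {H : Type*} [NormedAddCommGroup H] [InnerProductSpace ℂ H]
    [CompleteSpace H] (x : H →L[ℂ] H) :
    (∃ C : ℝ, 0 < C ∧ (x + adjoint x - (C : ℂ) • (adjoint x * x)).IsPositive) ↔
      ∃ (t : ℝ) (a : H →L[ℂ] H), 0 ≤ t ∧ ‖1 - a‖ ≤ 1 ∧ x = (t : ℂ) • a := by
  constructor
  · rintro ⟨C, hC, hsa, hpos⟩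
    refine ⟨2 / C, ((C/2 : ℝ) : ℂ) • x, by positivity, ?_, ?_⟩
    · refine opNorm_le_bound _ zero_le_one fun y => ?_
      have hp := hpos y
      rw [reApplyInnerSelf_apply, stmt7_key] at hp
      have hap : ((1 - ((C/2 : ℝ) : ℂ) • x) y : H) = y - ((C/2 : ℝ) : ℂ) • (x y) := rfl
      rw [hap, one_mul]
      have hsq : ‖y - ((C/2 : ℝ) : ℂ) • (x y)‖^2
          = ‖y‖^2 - 2 * RCLike.re (inner ℂ y (((C/2 : ℝ) : ℂ) • (x y) : H) : ℂ)
            + ‖((C/2 : ℝ) : ℂ) • (x y)‖^2 := norm_sub_sq _ _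
      have hre : RCLike.re (inner ℂ y (((C/2 : ℝ) : ℂ) • (x y) : H) : ℂ)
          = (C/2) * RCLike.re (inner ℂ (x y) y : ℂ) := by
        have hsymm : (inner ℂ y (x y) : ℂ) = starRingEnd ℂ (inner ℂ (x y) y) :=
          (inner_conj_symm _ _).symm
        rw [inner_smul_right, hsymm]
        simp [Complex.mul_re, Complex.ofReal_re, Complex.ofReal_im, RCLike.re_to_complex]
        exact Or.inl (by simpa using inner_re_symm (𝕜 := ℂ) y (x y))
      have hn : ‖((C/2 : ℝ) : ℂ) • (x y)‖ = (C/2) * ‖x y‖ := by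
        rw [norm_smul, Complex.norm_real, Real.norm_of_nonneg (by positivity : (0:ℝ) ≤ C/2)]
      rw [hre, hn] at hsq
      nlinarith [norm_nonneg y, norm_nonneg (y - ((C/2 : ℝ) : ℂ) • (x y)),
        mul_nonneg hC.le hp, sq_nonneg (‖y‖ + ‖y - ((C/2 : ℝ) : ℂ) • (x y)‖),
        sq_nonneg (C * ‖x y‖)]
    · rw [smul_smul]
      have hC0 : (C : ℂ) ≠ 0 := by exact_mod_cast hC.ne'
      have : ((2 / C : ℝ) : ℂ) * ((C/2 : ℝ) : ℂ) = 1 := by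
        push_cast
        field_simp
      rw [this, one_smul]
  · rintro ⟨t, a, ht, ha, rfl⟩
    have ht1 : (0:ℝ) < t + 1 := by linarith
    refine ⟨1 / (t + 1), by positivity, ContinuousLinearMap.isSelfAdjoint_iff_isSymmetric.mp (stmt7_sa _ _), fun y => ?_⟩
    rw [reApplyInnerSelf_apply, stmt7_key]
    have hxy : (((t : ℂ) • a) y : H) = (t : ℂ) • (a y) := rfl
    rw [hxy]
    have hre : RCLike.re (inner ℂ ((t : ℂ) • (a y) : H) y : ℂ)
        = t * RCLike.re (inner ℂ (a y) y : ℂ) := by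
      rw [inner_smul_left]
      simp [Complex.conj_ofReal]
    have hnorm : ‖(t : ℂ) • (a y)‖ = t * ‖a y‖ := by
      rw [norm_smul, Complex.norm_real, Real.norm_of_nonneg ht]
    rw [hre, hnorm]
    have h1 : ‖y - a y‖ ≤ ‖y‖ := by
      have hy : ((1 - a) y : H) = y - a y := rfl
      calc ‖y - a y‖ = ‖(1 - a) y‖ := by rw [hy]
        _ ≤ ‖1 - a‖ * ‖y‖ := le_opNorm _ _
        _ ≤ 1 * ‖y‖ := by gcongr
        _ = ‖y‖ := one_mul _
    have h2 : ‖y - a y‖^2 ≤ ‖y‖^2 := pow_le_pow_left₀ (norm_nonneg _) h1 2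
    have hsq : ‖y - a y‖^2 = ‖y‖^2 - 2 * RCLike.re (inner ℂ y (a y : H) : ℂ) + ‖a y‖^2 :=
      norm_sub_sq _ _
    rw [inner_re_symm] at hsq
    set r := RCLike.re (inner ℂ (a y) y : ℂ) with hr
    have hkey : ‖a y‖^2 ≤ 2 * r := by linarith [hsq ▸ h2]
    have hrpos : 0 ≤ r := by nlinarith [sq_nonneg ‖a y‖]
    have h4 : (1/(t+1)) * (t * ‖a y‖)^2 ≤ 2 * (t * r) := by
      rw [one_div_mul_eq_div, div_le_iff₀ ht1]
      nlinarith [mul_nonneg (mul_nonneg ht ht) (by linarith : 0 ≤ 2*r - ‖a y‖^2),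
        mul_nonneg ht hrpos]
    linarith
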